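/- Let G = (V,E) be a finite simple graph, let 0 ≤ α ≤ 1, and let O ⊆ V with |O| = k. Let w ∈ O and y ∈ V∖O with d(y) ≤ d(w), and set O' := (O∖{w}) ∪ {y}. Then cov_α(O') ≤ cov_α(O) + 2k. -/

import Mathlib

open Finset

/-- Number of edges of `G` with both endpoints in `X`. -/
noncomputable def mIn {V : Type*} (G : SimpleGraph V) (X : Finset V) : ℕ :=
  {e ∈ G.edgeSet | ∀ v ∈ e, v ∈ X}.ncard

/-- Number of edges of `G` with one endpoint in `X` and the other in `Y`. -/
noncomputable def mBtw {V : Type*} (G : SimpleGraph V) (X Y : Finset V) : ℕ :=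
  {e ∈ G.edgeSet | ∃ u ∈ X, ∃ w ∈ Y, e = s(u, w)}.ncard

/-- `cov_α(S) = (1-α)·m(S) + α·m(S, V∖S)`. -/
noncomputable def cov {V : Type*} [Fintype V] [DecidableEq V] (G : SimpleGraph V) (α : ℝ)
    (S : Finset V) : ℝ :=
  (1 - α) * mIn G S + α * mBtw G S Sᶜ

section aux
variable {V : Type*} [Fintype V] [DecidableEq V] (G : SimpleGraph V) [DecidableRel G.Adj]

/-- number of neighbors of `v` inside `S` -/
def nI (v : V) (S : Finset V) : ℕ := (S.filter (G.Adj v)).card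

def indG (X : Finset V) : SimpleGraph V where
  Adj u v := G.Adj u v ∧ u ∈ X ∧ v ∈ X
  symm := ⟨fun u v h => ⟨h.1.symm, h.2.2, h.2.1⟩⟩
  loopless := ⟨fun v h => G.loopless.irrefl v h.1⟩

instance (X : Finset V) : DecidableRel (indG G X).Adj :=
  fun u v => inferInstanceAs (Decidable (G.Adj u v ∧ u ∈ X ∧ v ∈ X))

def crsG (X : Finset V) : SimpleGraph V where
  Adj u v := G.Adj u v ∧ ((u ∈ X ∧ v ∉ X) ∨ (v ∈ X ∧ u ∉ X))
  symm := ⟨fun u v h => ⟨h.1.symm, h.2.symm⟩⟩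
  loopless := ⟨fun v h => G.loopless.irrefl v h.1⟩

instance (X : Finset V) : DecidableRel (crsG G X).Adj :=
  fun u v => inferInstanceAs (Decidable (G.Adj u v ∧ ((u ∈ X ∧ v ∉ X) ∨ (v ∈ X ∧ u ∉ X))))

lemma mIn_eq_card (X : Finset V) :
    mIn G X = (indG G X).edgeFinset.card := by
  have hset : {e ∈ G.edgeSet | ∀ v ∈ e, v ∈ X} = (indG G X).edgeSet := by
    ext e
    induction e using Sym2.ind with
    | _ a b =>
      simp only [Set.mem_setOf_eq, SimpleGraph.mem_edgeSet, Sym2.mem_iff, indG]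
      constructor
      · rintro ⟨h, h2⟩
        exact ⟨h, h2 a (Or.inl rfl), h2 b (Or.inr rfl)⟩
      · rintro ⟨h, ha, hb⟩
        refine ⟨h, ?_⟩
        rintro v (rfl | rfl) <;> assumption
  rw [mIn, hset, ← SimpleGraph.coe_edgeFinset, Set.ncard_coe_finset]

lemma mBtw_eq_card (X : Finset V) :
    mBtw G X Xᶜ = (crsG G X).edgeFinset.card := by
  have hset : {e ∈ G.edgeSet | ∃ u ∈ X, ∃ w ∈ Xᶜ, e = s(u, w)} = (crsG G X).edgeSet := by
    ext e
    induction e using Sym2.ind with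
    | _ a b =>
      simp only [Set.mem_setOf_eq, SimpleGraph.mem_edgeSet, crsG, Sym2.eq_iff, mem_compl]
      constructor
      · rintro ⟨h, u, hu, w, hw, (⟨rfl, rfl⟩ | ⟨rfl, rfl⟩)⟩
        · exact ⟨h, Or.inl ⟨hu, hw⟩⟩
        · exact ⟨h, Or.inr ⟨hu, hw⟩⟩
      · rintro ⟨h, (⟨ha, hb⟩ | ⟨hb, ha⟩)⟩
        · exact ⟨h, a, ha, b, hb, Or.inl ⟨rfl, rfl⟩⟩
        · exact ⟨h, b, hb, a, ha, Or.inr ⟨rfl, rfl⟩⟩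
  rw [mBtw, hset, ← SimpleGraph.coe_edgeFinset, Set.ncard_coe_finset]

lemma indG_degree_mem {X : Finset V} {v : V} (hv : v ∈ X) :
    (indG G X).degree v = nI G v X := by
  rw [SimpleGraph.degree, SimpleGraph.neighborFinset_eq_filter, nI]
  congr 1
  ext u
  rw [Finset.mem_filter, Finset.mem_filter]
  simp only [mem_filter, mem_univ, true_and, indG]
  tauto

lemma indG_degree_not_mem {X : Finset V} {v : V} (hv : v ∉ X) :
    (indG G X).degree v = 0 := by
  rw [SimpleGraph.degree, SimpleGraph.neighborFinset_eq_filter]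
  rw [Finset.card_eq_zero, Finset.filter_eq_empty_iff]
  intro u _
  simp only [indG]
  tauto

lemma crsG_degree_mem {X : Finset V} {v : V} (hv : v ∈ X) :
    (crsG G X).degree v = nI G v Xᶜ := by
  rw [SimpleGraph.degree, SimpleGraph.neighborFinset_eq_filter, nI]
  congr 1
  ext u
  rw [Finset.mem_filter, Finset.mem_filter]
  simp only [mem_filter, mem_compl, mem_univ, true_and, crsG]
  tauto

lemma crsG_degree_not_mem {X : Finset V} {v : V} (hv : v ∉ X) :
    (crsG G X).degree v = nI G v X := by
  rw [SimpleGraph.degree, SimpleGraph.neighborFinset_eq_filter, nI]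
  congr 1
  ext u
  rw [Finset.mem_filter, Finset.mem_filter]
  simp only [mem_filter, mem_univ, true_and, crsG]
  tauto

lemma two_mul_mIn (X : Finset V) :
    2 * mIn G X = ∑ v ∈ X, nI G v X := by
  rw [mIn_eq_card, ← SimpleGraph.sum_degrees_eq_twice_card_edges]
  rw [← Finset.sum_subset (Finset.subset_univ X)
    (fun x _ hx => indG_degree_not_mem G hx)]
  exact Finset.sum_congr rfl fun v hv => indG_degree_mem G hv

lemma nI_swap (X : Finset V) :
    ∑ v ∈ Xᶜ, nI G v X = ∑ v ∈ X, nI G v Xᶜ := by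
  simp only [nI, Finset.card_filter]
  rw [Finset.sum_comm]
  apply Finset.sum_congr rfl
  intro u _
  apply Finset.sum_congr rfl
  intro v _
  simp [G.adj_comm]

lemma mBtw_eq_sum (X : Finset V) :
    mBtw G X Xᶜ = ∑ v ∈ X, nI G v Xᶜ := by
  have h2 : 2 * mBtw G X Xᶜ = 2 * ∑ v ∈ X, nI G v Xᶜ := by
    rw [mBtw_eq_card, ← SimpleGraph.sum_degrees_eq_twice_card_edges]
    rw [← Finset.sum_add_sum_compl X]
    rw [Finset.sum_congr rfl (fun v hv => crsG_degree_mem G hv),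
      Finset.sum_congr rfl (fun v (hv : v ∈ Xᶜ) => crsG_degree_not_mem G (mem_compl.mp hv)),
      nI_swap, two_mul]
  omega

lemma nI_add_compl (v : V) (X : Finset V) :
    nI G v X + nI G v Xᶜ = G.degree v := by
  rw [SimpleGraph.degree, SimpleGraph.neighborFinset_eq_filter, nI, nI]
  rw [← Finset.card_union_of_disjoint
    (Finset.disjoint_filter_filter disjoint_compl_right), ← Finset.filter_union,
    Finset.union_compl]

lemma mBtw_add_two_mul_mIn (X : Finset V) :
    mBtw G X Xᶜ + 2 * mIn G X = ∑ v ∈ X, G.degree v := by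
  rw [mBtw_eq_sum, two_mul_mIn, ← Finset.sum_add_distrib]
  exact Finset.sum_congr rfl fun v _ => by rw [Nat.add_comm, nI_add_compl]

lemma nI_insert_self {z : V} (A : Finset V) :
    nI G z (insert z A) = nI G z A := by
  rw [nI, Finset.filter_insert, if_neg (G.loopless.irrefl z)]; rfl

lemma nI_insert {v z : V} {A : Finset V} (hz : z ∉ A) :
    nI G v (insert z A) = nI G v A + if G.Adj v z then 1 else 0 := by
  rw [nI, Finset.filter_insert]
  split
  · rw [Finset.card_insert_of_notMem (fun h => hz (Finset.mem_of_mem_filter z h))]; rfl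
  · rfl

lemma mIn_insert {z : V} {A : Finset V} (hz : z ∉ A) :
    mIn G (insert z A) = mIn G A + nI G z A := by
  have h : 2 * mIn G (insert z A) = 2 * (mIn G A + nI G z A) := by
    rw [two_mul_mIn, Finset.sum_insert hz, nI_insert_self]
    rw [Finset.sum_congr rfl (fun v (_ : v ∈ A) => nI_insert G hz)]
    rw [Finset.sum_add_distrib, ← two_mul_mIn]
    have : ∑ v ∈ A, (if G.Adj v z then 1 else 0) = nI G z A := by
      rw [nI, Finset.card_filter]
      exact Finset.sum_congr rfl fun v _ => by simp [G.adj_comm]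
    rw [this]; ring
  omega

end aux

theorem stmt3 {V : Type*} [Fintype V] [DecidableEq V] (G : SimpleGraph V)
    [DecidableRel G.Adj] (α : ℝ) (hα0 : 0 ≤ α) (hα1 : α ≤ 1)
    (k : ℕ) (O : Finset V) (hO : O.card = k)
    (w y : V) (hw : w ∈ O) (hy : y ∉ O) (hd : G.degree y ≤ G.degree w) :
    cov G α (insert y (O.erase w)) ≤ cov G α O + 2 * (k : ℝ) := by
  set A := O.erase w with hAdef
  have hA : insert w A = O := Finset.insert_erase hw
  have hwA : w ∉ A := Finset.notMem_erase w O
  have hyA : y ∉ A := fun h => hy (Finset.erase_subset w O h)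
  have hcard : A.card + 1 = k := by rw [hAdef, Finset.card_erase_add_one hw, hO]
  have h1 : mIn G O = mIn G A + nI G w A := by rw [← hA, mIn_insert G hwA]
  have h2 : mIn G (insert y A) = mIn G A + nI G y A := mIn_insert G hyA
  have h3 : nI G y A ≤ A.card := Finset.card_filter_le _ _
  have h3' : nI G w A ≤ A.card := Finset.card_filter_le _ _
  have h4 : mBtw G O Oᶜ + 2 * mIn G O = (∑ v ∈ A, G.degree v) + G.degree w := by
    rw [mBtw_add_two_mul_mIn, ← hA, Finset.sum_insert hwA]; ring
  have h5 : mBtw G (insert y A) (insert y A)ᶜ + 2 * mIn G (insert y A)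
      = (∑ v ∈ A, G.degree v) + G.degree y := by
    rw [mBtw_add_two_mul_mIn, Finset.sum_insert hyA]; ring
  -- the two nat inequalities
  have hIn : mIn G (insert y A) ≤ mIn G O + A.card := by omega
  have hBtw : mBtw G (insert y A) (insert y A)ᶜ ≤ mBtw G O Oᶜ + 2 * A.card := by omega
  -- pass to the reals
  rw [cov, cov]
  have c1 : (mIn G (insert y A) : ℝ) ≤ (mIn G O : ℝ) + (A.card : ℝ) := by
    exact_mod_cast hIn
  have c2 : (mBtw G (insert y A) (insert y A)ᶜ : ℝ)
      ≤ (mBtw G O Oᶜ : ℝ) + 2 * (A.card : ℝ) := by exact_mod_cast hBtw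
  have c3 : (A.card : ℝ) + 1 = (k : ℝ) := by exact_mod_cast hcard
  have c4 : (0:ℝ) ≤ (A.card : ℝ) := Nat.cast_nonneg _
  nlinarith [mul_nonneg hα0 c4, mul_nonneg (sub_nonneg.mpr hα1) c4,
    mul_le_mul_of_nonneg_left c1 (sub_nonneg.mpr hα1),
    mul_le_mul_of_nonneg_left c2 hα0]
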